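/- Let α > 2 and ω > 0, and set U*(ω) = inf{ −U(x) : K_ω(x) = 0 }. If a configuration x satisfies K_ω(x) < 0, then −U(x) > U*(ω). (Proof by scaling: since λ ↦ K_ω(λx) = ω²λ² I(x) + λ^{−α} α U(x) is negative at λ = 1 and positive for large λ, there is λ* > 1 with K_ω(λ* x) = 0, whence −U(x) ≥ (λ*)^α U*(ω) > U*(ω).) -/
import Mathlib


/- STATEMENT 11: if K_ω(x) < 0 then −U(x) > U*(ω) = inf{−U : K_ω = 0}, for α > 2. -/

namespace NBodyPaper

open Real

noncomputable section

abbrev E3 := EuclideanSpace ℝ (Fin 3)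

variable {N : ℕ}

/-- The α-homogeneous potential `U(x) = -∑_{i<j} m_i m_j / |x_i - x_j|^α`. -/
def pot (α : ℝ) (m : Fin N → ℝ) (q : Fin N → E3) : ℝ :=
  -∑ i : Fin N, ∑ j ∈ Finset.univ.filter (fun j => i < j), m i * m j / ‖q i - q j‖ ^ α

/-- Moment of inertia `I(x) = ∑ m_i |x_i|²`. -/
def inertia (m : Fin N → ℝ) (q : Fin N → E3) : ℝ := ∑ i, m i * ‖q i‖ ^ 2

/-- Collision-free configuration. -/
def OffDiag (q : Fin N → E3) : Prop := ∀ i j, i ≠ j → q i ≠ q j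

/-- Center of mass at the origin. -/
def comZero (m : Fin N → ℝ) (q : Fin N → E3) : Prop := ∑ i, m i • q i = 0

/-- The threshold function `K_ω(x) = ω² I(x) + α U(x)`. -/
def Kfun (α : ℝ) (m : Fin N → ℝ) (ω : ℝ) (q : Fin N → E3) : ℝ :=
  ω ^ 2 * inertia m q + α * pot α m q

/-- `E_ω(x) = (ω²/2) I(x) + U(x)`. -/
def Eomega (α : ℝ) (m : Fin N → ℝ) (ω : ℝ) (q : Fin N → E3) : ℝ :=
  ω ^ 2 / 2 * inertia m q + pot α m q

/-- The excited energy `E*(ω) = inf { E_ω(x) : K_ω(x) = 0 }`, the infimum taken over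
collision-free configurations with center of mass zero. -/
def Estar (α : ℝ) (m : Fin N → ℝ) (ω : ℝ) : ℝ :=
  sInf {e : ℝ | ∃ q : Fin N → E3, OffDiag q ∧ comZero m q ∧ Kfun α m ω q = 0 ∧ e = Eomega α m ω q}

/-- `U*(ω) = inf { −U(x) : K_ω(x) = 0 }`, over collision-free configurations with
center of mass zero. -/
def Ustar (α : ℝ) (m : Fin N → ℝ) (ω : ℝ) : ℝ :=
  sInf {u : ℝ | ∃ q : Fin N → E3, OffDiag q ∧ comZero m q ∧ Kfun α m ω q = 0 ∧ u = -pot α m q}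

lemma inertia_nonneg' {N : ℕ} (m : Fin N → ℝ) (hm : ∀ i, 0 ≤ m i) (q : Fin N → E3) :
    0 ≤ inertia m q :=
  Finset.sum_nonneg fun i _ => mul_nonneg (hm i) (sq_nonneg _)

lemma pot_smul' {N : ℕ} (α : ℝ) (m : Fin N → ℝ) {c : ℝ} (hc : 0 < c) (x : Fin N → E3) :
    pot α m (fun i => c • x i) = c ^ (-α) * pot α m x := by
  unfold pot
  rw [mul_neg, neg_inj, Finset.mul_sum]
  refine Finset.sum_congr rfl fun i _ => ?_
  rw [Finset.mul_sum]
  refine Finset.sum_congr rfl fun j _ => ?_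
  rw [← smul_sub, norm_smul, Real.norm_eq_abs, abs_of_pos hc,
    Real.mul_rpow hc.le (norm_nonneg _), Real.rpow_neg hc.le,
    div_mul_eq_div_div_swap, div_eq_inv_mul]

lemma inertia_smul' {N : ℕ} (m : Fin N → ℝ) {c : ℝ} (hc : 0 < c) (x : Fin N → E3) :
    inertia m (fun i => c • x i) = c ^ 2 * inertia m x := by
  unfold inertia
  rw [Finset.mul_sum]
  refine Finset.sum_congr rfl fun i _ => ?_
  rw [norm_smul, Real.norm_eq_abs, abs_of_pos hc, mul_pow]
  ring

/-- **Below the constraint set the potential is large**: for `α > 2` and `ω > 0`, if a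
configuration satisfies `K_ω(x) < 0`, then `−U(x) > U*(ω)`. -/
theorem neg_pot_gt_Ustar_of_Kfun_neg {N : ℕ} (α ω : ℝ) (hα : 2 < α) (hω : 0 < ω)
    (m : Fin N → ℝ) (hm : ∀ i, 0 < m i)
    (x : Fin N → E3) (hx : OffDiag x) (hcom : comZero m x)
    (hK : Kfun α m ω x < 0) :
    Ustar α m ω < -pot α m x := by
  have hα0 : 0 < α := by linarith
  have hK' : ω ^ 2 * inertia m x + α * pot α m x < 0 := hK
  have hI0 : 0 ≤ inertia m x := inertia_nonneg' m (fun i => (hm i).le) x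
  have hω2 : 0 < ω ^ 2 := pow_pos hω 2
  have hαU : α * pot α m x < 0 := by nlinarith
  have hUneg : pot α m x < 0 := by nlinarith
  -- positivity of the moment of inertia
  have hIpos : 0 < inertia m x := by
    rcases hI0.lt_or_eq with h | h
    · exact h
    · exfalso
      have hx0 : ∀ i, x i = 0 := by
        intro i
        have h0 := (Finset.sum_eq_zero_iff_of_nonneg
          (fun i _ => mul_nonneg (hm i).le (sq_nonneg ‖x i‖))).mp h.symm i (Finset.mem_univ i)
        rcases mul_eq_zero.mp h0 with h' | h'
        · exact absurd h' (hm i).ne'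
        · have : ‖x i‖ = 0 := by
            have := pow_eq_zero_iff (n := 2) (by norm_num) |>.mp h'
            exact this
          simpa using this
      have hU0 : pot α m x = 0 := by
        unfold pot
        simp [hx0, Real.zero_rpow hα0.ne']
      rw [hU0] at hαU
      simp at hαU
  set Iv := inertia m x with hIv
  set Uv := pot α m x with hUv
  have hωI : 0 < ω ^ 2 * Iv := mul_pos hω2 hIpos
  set A := α * (-Uv) / (ω ^ 2 * Iv) with hAdef
  have hA : 1 < A := by
    rw [hAdef, lt_div_iff₀ hωI]
    nlinarith
  have hA0 : 0 < A := lt_trans one_pos hA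
  have h2α : 0 < 2 + α := by linarith
  set lam := A ^ ((2 + α)⁻¹) with hlamdef
  have hlam1 : 1 < lam :=
    (Real.one_lt_rpow_iff_of_pos hA0).mpr (Or.inl ⟨hA, by positivity⟩)
  have hlam0 : 0 < lam := lt_trans one_pos hlam1
  have hlampow : lam ^ (2 + α) = A := by
    rw [hlamdef, ← Real.rpow_mul hA0.le, inv_mul_cancel₀ h2α.ne', Real.rpow_one]
  set P := lam ^ α with hPdef
  have hP1 : 1 < P :=
    (Real.one_lt_rpow_iff_of_pos hlam0).mpr (Or.inl ⟨hlam1, hα0⟩)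
  have hP0 : 0 < P := lt_trans one_pos hP1
  have hl2P : lam ^ 2 * P = A := by
    calc lam ^ 2 * P = lam ^ (2 : ℝ) * lam ^ α := by rw [Real.rpow_two]
      _ = lam ^ (2 + α) := (Real.rpow_add hlam0 2 α).symm
      _ = A := hlampow
  have hA' : A * (ω ^ 2 * Iv) = α * (-Uv) := by
    rw [hAdef]; field_simp
  set q : Fin N → E3 := fun i => lam • x i with hqdef
  have hq_off : OffDiag q := by
    intro i j hij hne
    exact hx i j hij (smul_right_injective E3 hlam0.ne' hne)
  have hq_com : comZero m q := by
    unfold comZero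
    have : ∀ i, m i • q i = lam • (m i • x i) := fun i => smul_comm _ _ _
    have h0 : ∑ i, m i • x i = 0 := hcom
    simp only [this, ← Finset.smul_sum, h0, smul_zero]
  have hpotq : pot α m q = P⁻¹ * Uv := by
    rw [hqdef, pot_smul' α m hlam0 x, Real.rpow_neg hlam0.le, hPdef, hUv]
  have hIq : inertia m q = lam ^ 2 * Iv := by
    rw [hqdef, inertia_smul' m hlam0 x, hIv]
  have hKq : Kfun α m ω q = 0 := by
    unfold Kfun
    rw [hpotq, hIq]
    have hPne : P ≠ 0 := hP0.ne'
    have h1 : ω ^ 2 * lam ^ 2 * Iv * P + α * Uv = 0 := by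
      linear_combination (ω ^ 2 * Iv) * hl2P + hA'
    field_simp
    linear_combination h1
  have hmem : -pot α m q ∈
      {u : ℝ | ∃ q : Fin N → E3, OffDiag q ∧ comZero m q ∧ Kfun α m ω q = 0 ∧ u = -pot α m q} :=
    ⟨q, hq_off, hq_com, hKq, rfl⟩
  have hbdd : BddBelow
      {u : ℝ | ∃ q : Fin N → E3, OffDiag q ∧ comZero m q ∧ Kfun α m ω q = 0 ∧ u = -pot α m q} := by
    refine ⟨0, fun u hu => ?_⟩
    obtain ⟨q', -, -, hK'', rfl⟩ := hu
    have hK''' : ω ^ 2 * inertia m q' + α * pot α m q' = 0 := hK''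
    have hI' : 0 ≤ inertia m q' := inertia_nonneg' m (fun i => (hm i).le) q'
    nlinarith [mul_nonneg hω2.le hI']
  have hle : Ustar α m ω ≤ -pot α m q := csInf_le hbdd hmem
  have hlt : -pot α m q < -Uv := by
    rw [hpotq]
    have hPinv : P⁻¹ < 1 := inv_lt_one_of_one_lt₀ hP1
    nlinarith
  calc Ustar α m ω ≤ -pot α m q := hle
    _ < -Uv := hlt

end
end NBodyPaper
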